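/- Let D be a triangulated category with a bounded t-structure with heart M and cohomology functors h^i : D → M. Let F ∈ D, and suppose that for all integers i < j, Hom(h^j(F), h^i(F)[j+1-i]) = 0. Then F is isomorphic to the direct sum ⊕_{i∈ℤ} h^i(F)[-i]. -/

import Mathlib

open CategoryTheory Limits Pretriangulated Triangulated

universe v u

section Aux

variable {D : Type u} [Category.{v} D] [Preadditive D] [HasShift D ℤ]
  [∀ n : ℤ, (shiftFunctor D n).Additive]

private lemma shift_hom_zero_aux (A B : D) (p : ℤ) (hz : ∀ f : A ⟶ B⟦p⟧, f = 0)
    (m n : ℤ) (hmn : n + -m = p) (g : A⟦m⟧ ⟶ B⟦n⟧) : g = 0 := by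
  apply (shiftFunctor D (-m)).map_injective
  rw [Functor.map_zero]
  have hf := hz ((shiftFunctorCompIsoId D m (-m) (by ring)).inv.app A ≫
    (shiftFunctor D (-m)).map g ≫ (shiftFunctorAdd' D n (-m) p hmn).inv.app B)
  have heq : (shiftFunctor D (-m)).map g =
      (shiftFunctorCompIsoId D m (-m) (by ring)).hom.app A ≫
        ((shiftFunctorCompIsoId D m (-m) (by ring)).inv.app A ≫
          (shiftFunctor D (-m)).map g ≫ (shiftFunctorAdd' D n (-m) p hmn).inv.app B) ≫
        (shiftFunctorAdd' D n (-m) p hmn).hom.app B := by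
    simp
  rw [heq, hf, Limits.zero_comp, Limits.comp_zero]

private lemma double_shift_hom_zero (A B : D) (p : ℤ) (hz : ∀ f : A ⟶ B⟦p⟧, f = 0)
    (m s n : ℤ) (hmn : s + n + -m = p) (g : A⟦m⟧ ⟶ (B⟦s⟧)⟦n⟧) : g = 0 := by
  have h1 : g ≫ ((shiftFunctorAdd' D s n (s + n) rfl).inv.app B) = 0 :=
    shift_hom_zero_aux A B p hz m (s + n) hmn _
  have h2 : g = (g ≫ ((shiftFunctorAdd' D s n (s + n) rfl).inv.app B)) ≫
      ((shiftFunctorAdd' D s n (s + n) rfl).hom.app B) := by simp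
  rw [h2, h1, Limits.zero_comp]

end Aux

section AuxBiprod

variable {D : Type u} [Category.{v} D] [HasZeroMorphisms D]

private noncomputable def biproductOptionIso {J : Type} [Fintype J] [DecidableEq J]
    (f : Option J → D) [HasBiproduct f] [HasBiproduct fun j : J => f (some j)]
    [HasBinaryBiproduct (⨁ fun j : J => f (some j)) (f none)] :
    (⨁ fun j : J => f (some j)) ⊞ f none ≅ ⨁ f where
  hom := biprod.desc (biproduct.desc fun j => biproduct.ι f (some j)) (biproduct.ι f none)
  inv := biproduct.desc fun o => match o with
    | none => biprod.inr
    | some j => biproduct.ι (fun j : J => f (some j)) j ≫ biprod.inl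
  hom_inv_id := by
    ext
    all_goals simp [biproduct.ι_π]
  inv_hom_id := by
    ext o o'
    rcases o with _ | j <;> rcases o' with _ | j' <;>
      simp [biproduct.ι_π]

end AuxBiprod

private def iccSuccEquiv (a k : ℤ) (hak : a ≤ k + 1) :
    Option ((Finset.Icc a k : Finset ℤ) : Type) ≃ ((Finset.Icc a (k + 1) : Finset ℤ) : Type) where
  toFun o := match o with
    | none => ⟨k + 1, by rw [Finset.mem_Icc]; omega⟩
    | some j => ⟨j.1, by have := j.2; rw [Finset.mem_Icc] at this ⊢; omega⟩
  invFun x := if h : (x : ℤ) = k + 1 then none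
    else some ⟨x.1, by have := x.2; rw [Finset.mem_Icc] at this ⊢; omega⟩
  left_inv o := by
    rcases o with _ | j
    · show (if h : ((k + 1 : ℤ)) = k + 1 then none else _) = none
      rw [dif_pos rfl]
    · have hj := j.2
      rw [Finset.mem_Icc] at hj
      show (if h : ((j.1 : ℤ)) = k + 1 then none else _) = some j
      rw [dif_neg (show ¬(j.1 : ℤ) = k + 1 by omega)]
  right_inv x := by
    dsimp only
    by_cases h : (x : ℤ) = k + 1
    · rw [dif_pos h]
      exact Subtype.ext h.symm
    · rw [dif_neg h]

/-- Let `D` be a triangulated category with a bounded t-structure `t`, with heart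
`M` and cohomology functors `h^i`.  Let `F ∈ D` with cohomology objects `H i = h^i(F)`
(encoded by the tower of truncations `Fk k = τ_{≤k} F` together with the truncation triangles
`τ_{≤k-1}F → τ_{≤k}F → h^k(F)[-k] →`).  If `Hom(h^j(F), h^i(F)[j+1-i]) = 0` for all
`i < j`, then `F ≅ ⨁_{i} h^i(F)[-i]`. -/
theorem decomposition_of_hom_vanishing
    {D : Type u} [Category.{v} D] [HasZeroObject D] [Preadditive D] [HasShift D ℤ]
    [∀ n : ℤ, (shiftFunctor D n).Additive] [Pretriangulated D] [HasFiniteBiproducts D]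
    (t : TStructure D)
    -- the t-structure is bounded
    (hbounded : ∀ X : D, ∃ m n : ℤ, t.le n X ∧ t.ge m X)
    (F : D)
    -- the cohomology objects `H i = h^i F`, lying in the heart of `t`
    (H : ℤ → D) (hheart : ∀ i, t.le 0 (H i) ∧ t.ge 0 (H i))
    -- the truncation tower `Fk k = τ_{≤k} F` exhibiting the `H i` as the cohomologies of `F`
    (Fk : ℤ → D) (a b : ℤ) (hab : a ≤ b)
    (hbot : IsZero (Fk (a - 1))) (htop : Nonempty (Fk b ≅ F))
    (hsupp : ∀ i : ℤ, (i < a ∨ b < i) → IsZero (H i))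
    (htri : ∀ k : ℤ, ∃ (u : Fk (k - 1) ⟶ Fk k) (v : Fk k ⟶ (H k)⟦(-k : ℤ)⟧)
      (w : (H k)⟦(-k : ℤ)⟧ ⟶ (Fk (k - 1))⟦(1 : ℤ)⟧),
      Triangle.mk u v w ∈ distTriang D)
    -- the Hom-vanishing hypothesis `Hom(h^j(F), h^i(F)[j+1-i]) = 0` for `i < j`
    (hvanish : ∀ i j : ℤ, i < j → ∀ f : H j ⟶ (H i)⟦(j + 1 - i : ℤ)⟧, f = 0) :
    Nonempty (F ≅ ⨁ fun i : (Finset.Icc a b : Finset ℤ) => (H i)⟦(-(i : ℤ) : ℤ)⟧) := by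
  obtain ⟨etop⟩ := htop
  have main : ∀ k : ℤ, a - 1 ≤ k →
      Nonempty (Fk k ≅ ⨁ fun i : (Finset.Icc a k : Finset ℤ) => (H i)⟦(-(i : ℤ) : ℤ)⟧) := by
    refine Int.le_induction ?_ ?_
    · refine ⟨hbot.iso ?_⟩
      rw [IsZero.iff_id_eq_zero]
      apply biproduct.hom_ext
      intro j
      exfalso
      have := j.2
      rw [Finset.mem_Icc] at this
      omega
    · intro k hk ih
      obtain ⟨e⟩ := ih
      have ht := htri (k + 1)
      rw [show k + 1 - 1 = k by ring] at ht
      obtain ⟨u, v, w, hT⟩ := ht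
      -- the connecting map vanishes
      have hw : w = 0 := by
        rw [← cancel_mono ((shiftFunctor D (1 : ℤ)).map e.hom ≫
            ((shiftFunctor D (1 : ℤ)).mapBiproduct
              (fun i : (Finset.Icc a k : Finset ℤ) => (H i)⟦(-(i : ℤ) : ℤ)⟧)).hom),
          Limits.zero_comp]
        apply biproduct.hom_ext
        intro j
        rw [Limits.zero_comp, Category.assoc, Category.assoc]
        have hj : (j : ℤ) < k + 1 := by
          have := j.2
          rw [Finset.mem_Icc] at this
          omega
        exact double_shift_hom_zero (H (k + 1)) (H j.1) ((k + 1) + 1 - j.1)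
          (hvanish j.1 (k + 1) hj) (-(k + 1)) (-(j.1 : ℤ)) 1 (by ring) _
      obtain ⟨e2, _, _⟩ := exists_iso_binaryBiproduct_of_distTriang _ hT hw
      have hak : a ≤ k + 1 := by omega
      -- assemble
      refine ⟨e2 ≪≫ biprod.mapIso e (Iso.refl _) ≪≫ ?_ ≪≫
        biproduct.whiskerEquiv (iccSuccEquiv a k hak) (fun o => Iso.refl _)⟩
      exact biproductOptionIso
        (fun o : Option ((Finset.Icc a k : Finset ℤ) : Type) =>
          (fun i : (Finset.Icc a (k + 1) : Finset ℤ) => (H i)⟦(-(i : ℤ) : ℤ)⟧)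
            (iccSuccEquiv a k hak o))
  obtain ⟨e⟩ := main b (by omega)
  exact ⟨etop.symm ≪≫ e⟩
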